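/- Let G be a graph with spectral radius μ and positive unit eigenvector x to μ. If uv ∈ E(G) satisfies x_u·x_v ≤ 1/(4μ), then the spectral radius of G − uv satisfies μ(G − uv)² > μ² − 1. -/

import Mathlib

open Matrix Finset

lemma rayleigh_le_of_top {n : ℕ} (A : Matrix (Fin n) (Fin n) ℝ) (hA : A.IsHermitian)
    {μ : ℝ} (hμ2 : ∀ ν : ℝ, Module.End.HasEigenvalue A.mulVecLin ν → ν ≤ μ)
    (x : Fin n → ℝ) (hx : ∑ i, x i ^ 2 = 1) :
    x ⬝ᵥ A *ᵥ x ≤ μ := by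
  have hn : x ≠ 0 := by
    intro h; rw [h] at hx; simp at hx
  set E := EuclideanSpace ℝ (Fin n)
  set x' : E := (WithLp.equiv 2 _).symm x with hx'
  have hx'0 : x' ≠ 0 := by
    intro h; apply hn; simpa [hx', WithLp.equiv] using congrArg WithLp.ofLp h
  have hnt : Nontrivial E := nontrivial_of_ne x' 0 hx'0
  set T : E →ₗ[ℝ] E := Matrix.toEuclideanLin A with hT
  have hsym : T.IsSymmetric := Matrix.isHermitian_iff_isSymmetric.mp hA
  set f : {z : E // z ≠ 0} → ℝ := fun z =>
    RCLike.re (inner ℝ (T z) (z : E) : ℝ) / ‖(z : E)‖ ^ 2 with hf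
  have hev : Module.End.HasEigenvalue T (⨆ z, f z) :=
    hsym.hasEigenvalue_iSup_of_finiteDimensional
  obtain ⟨y, hy⟩ := hev.exists_hasEigenvector
  have hy1 : A.mulVecLin (WithLp.equiv 2 _ y) = (⨆ z, f z) • (WithLp.equiv 2 _ y) := by
    have := hy.apply_eq_smul
    exact congrArg (WithLp.equiv 2 _) this
  have hs_le : (⨆ z, f z) ≤ μ := by
    refine hμ2 _ (Module.End.hasEigenvalue_of_hasEigenvector
      ⟨Module.End.mem_eigenspace_iff.mpr hy1, ?_⟩)
    simpa [WithLp.equiv] using hy.2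
  set Tc := LinearMap.toContinuousLinearMap T with hTc
  have hbdd : BddAbove (Set.range f) := by
    refine ⟨‖Tc‖, ?_⟩
    rintro r ⟨z, rfl⟩
    have hz : (0:ℝ) < ‖(z:E)‖ := norm_pos_iff.mpr z.2
    have h1 : (inner ℝ (T z) (z:E) : ℝ) ≤ ‖T (z:E)‖ * ‖(z:E)‖ := real_inner_le_norm _ _
    have h2 : ‖T (z:E)‖ ≤ ‖Tc‖ * ‖(z:E)‖ := Tc.le_opNorm (z:E)
    simp only [hf, RCLike.re_to_real]
    rw [div_le_iff₀ (by positivity)]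
    nlinarith [norm_nonneg (T (z:E))]
  have hval : x ⬝ᵥ A *ᵥ x ≤ ⨆ z, f z := by
    have h := le_ciSup hbdd ⟨x', hx'0⟩
    have hinner : (inner ℝ (T x') (x' : E) : ℝ) = x ⬝ᵥ A *ᵥ x := by
      simp only [hT, hx', WithLp.equiv_symm_apply, Matrix.toEuclideanLin_apply, WithLp.ofLp_toLp, PiLp.inner_apply,
        PiLp.toLp_apply, RCLike.inner_apply, conj_trivial, dotProduct]
      exact Finset.sum_congr rfl fun i _ => by rw [real_inner_eq_re_inner, RCLike.inner_apply, conj_trivial, RCLike.re_to_real]; rfl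
    have hnorm : ‖(x' : E)‖ ^ 2 = 1 := by
      rw [← real_inner_self_eq_norm_sq]
      rw [hx']
      rw [PiLp.inner_apply]
      simp only [WithLp.equiv_symm_apply, PiLp.toLp_apply, RCLike.inner_apply, conj_trivial, ← sq]
      exact hx
    simpa [hf, hinner, hnorm] using h
  linarith

def IsSpecRad {n : ℕ} (A : Matrix (Fin n) (Fin n) ℝ) (μ : ℝ) : Prop :=
  Module.End.HasEigenvalue A.mulVecLin μ ∧
    ∀ ν : ℝ, Module.End.HasEigenvalue A.mulVecLin ν → ν ≤ μ

open scoped Classical in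
theorem claim3 (n : ℕ) (G : SimpleGraph (Fin n)) [DecidableRel G.Adj] (μ μ' : ℝ)
    (hμ : IsSpecRad (G.adjMatrix ℝ) μ)
    (x : Fin n → ℝ) (hpos : ∀ i, 0 < x i)
    (hx : (G.adjMatrix ℝ).mulVec x = μ • x)
    (hunit : ∑ i, (x i) ^ 2 = 1)
    (u v : Fin n) (huv : G.Adj u v)
    (hsmall : x u * x v ≤ 1 / (4 * μ))
    (hμ' : IsSpecRad ((G.deleteEdges {s(u, v)}).adjMatrix ℝ) μ') :
    μ' ^ 2 > μ ^ 2 - 1 := by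
  have hne : u ≠ v := huv.ne
  -- eigenvector equations at u and v
  have key : ∀ a b : Fin n, G.Adj a b → x b ≤ μ * x a := by
    intro a b hab
    have h := congrFun hx a
    rw [SimpleGraph.adjMatrix_mulVec_apply] at h
    have hb : b ∈ G.neighborFinset a := (SimpleGraph.mem_neighborFinset G a b).mpr hab
    have := Finset.single_le_sum (fun i _ => (hpos i).le) hb
    rw [h] at this
    simpa using this
  have h1 : x v ≤ μ * x u := key u v huv
  have h2 : x u ≤ μ * x v := key v u huv.symm
  have hμpos : 0 < μ := by nlinarith [hpos u, hpos v]
  have hμ1 : 1 ≤ μ := by nlinarith [hpos u, hpos v, mul_pos (hpos u) (hpos v)]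
  -- quadratic form of G equals μ
  have hq : x ⬝ᵥ (G.adjMatrix ℝ) *ᵥ x = μ := by
    rw [hx]
    calc x ⬝ᵥ (μ • x) = ∑ i, x i * (μ * x i) := rfl
    _ = μ * ∑ i, x i ^ 2 := by rw [Finset.mul_sum]; exact Finset.sum_congr rfl fun i _ => by ring
    _ = μ := by rw [hunit, mul_one]
  -- the deleted-edge adjacency matrix
  set B : Matrix (Fin n) (Fin n) ℝ :=
    Matrix.single u v 1 + Matrix.single v u 1 with hB
  have hAB : (G.deleteEdges {s(u, v)}).adjMatrix ℝ = G.adjMatrix ℝ - B := by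
    ext i j
    simp only [SimpleGraph.adjMatrix_apply, SimpleGraph.deleteEdges_adj, Set.mem_singleton_iff,
      Sym2.eq_iff, hB, Matrix.sub_apply, Matrix.add_apply, Matrix.single, Matrix.of_apply]
    by_cases h1' : i = u ∧ j = v
    · obtain ⟨rfl, rfl⟩ := h1'
      simp [huv, hne, hne.symm]
    · by_cases h2' : i = v ∧ j = u
      · obtain ⟨rfl, rfl⟩ := h2'
        simp [huv.symm, hne, hne.symm]
      · have h1'' : ¬(u = i ∧ v = j) := fun h => h1' ⟨h.1.symm, h.2.symm⟩
        have h2'' : ¬(v = i ∧ u = j) := fun h => h2' ⟨h.1.symm, h.2.symm⟩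
        simp [h1', h2', h1'', h2'']
  have hqB : x ⬝ᵥ B *ᵥ x = x u * x v + x v * x u := by
    rw [hB, Matrix.add_mulVec, dotProduct_add, Matrix.single_mulVec,
      Matrix.single_mulVec]
    simp [dotProduct, Function.update_apply, Finset.sum_ite_eq', mul_comm]
  have hq' : x ⬝ᵥ ((G.deleteEdges {s(u, v)}).adjMatrix ℝ) *ᵥ x = μ - 2 * (x u * x v) := by
    rw [hAB, Matrix.sub_mulVec, dotProduct_sub, hq, hqB]; ring
  -- Hermitian
  have hA' : ((G.deleteEdges {s(u, v)}).adjMatrix ℝ).IsHermitian := by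
    rw [Matrix.IsHermitian, Matrix.conjTranspose_eq_transpose_of_trivial]
    exact SimpleGraph.isSymm_adjMatrix _
  have hray : μ - 2 * (x u * x v) ≤ μ' := by
    rw [← hq']
    exact rayleigh_le_of_top _ hA' hμ'.2 x hunit
  have hsm : 4 * μ * (x u * x v) ≤ 1 := by
    rw [div_eq_inv_mul] at hsmall
    have h4 : (0:ℝ) < 4 * μ := by linarith
    calc 4 * μ * (x u * x v) ≤ 4 * μ * ((4*μ)⁻¹ * 1) := by
          apply mul_le_mul_of_nonneg_left hsmall h4.le
    _ = 1 := by field_simp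
  have ht : 0 < x u * x v := mul_pos (hpos u) (hpos v)
  set t := x u * x v with htdef
  have h6 : 1/2 ≤ μ - 2 * t := by nlinarith
  have h7 : 0 ≤ (μ' - (μ - 2*t)) * (μ' + (μ - 2*t)) :=
    mul_nonneg (by linarith) (by linarith)
  nlinarith [mul_pos ht ht, hsm, h7]
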